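/- arXiv:0908.3855 — 5 statements merged into one kernel-verified Lean document; each statement's English description precedes it below -/
import Mathlib

section
/- Let ξ₀ > 0 and let φ : ℝ → ℂ be integrable with Fourier transform vanishing outside the open interval (−ξ₀, ξ₀), i.e. 𝓕φ(ξ) = 0 whenever |ξ| ≥ ξ₀. Then for every ξ ∈ ℝ, 𝓕(x ↦ φ(x)·sin(2π ξ₀ x))(ξ) = −i·sign(ξ)·𝓕(x ↦ φ(x)·cos(2π ξ₀ x))(ξ). In other words, the Hilbert transform of the bandlimited windowed cosine φ(x)cos(2π ξ₀ x) is the windowed sine φ(x)sin(2π ξ₀ x): the Hilbert transform shifts the phase of the modulating sinusoid while preserving the window. -/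
open MeasureTheory
open scoped FourierTransform Real

lemma char_integrable' (f : ℝ → ℂ) (hf : Integrable f) (ξ : ℝ) :
    Integrable (fun v : ℝ => Complex.exp (↑(-2 * π * v * ξ) * Complex.I) * f v) :=
  hf.bdd_mul (c := 1) (Continuous.aestronglyMeasurable (by fun_prop))
    (Filter.Eventually.of_forall fun x => le_of_eq (Complex.norm_exp_ofReal_mul_I _))

lemma exp_mul_integrable' (φ : ℝ → ℂ) (hφ : Integrable φ) (a : ℝ) :
    Integrable (fun x : ℝ => Complex.exp ((a * x : ℝ) * Complex.I) * φ x) :=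
  hφ.bdd_mul (c := 1) (Continuous.aestronglyMeasurable (by fun_prop))
    (Filter.Eventually.of_forall fun x => le_of_eq (Complex.norm_exp_ofReal_mul_I _))

lemma fourier_mod' (φ : ℝ → ℂ) (a ξ : ℝ) :
    𝓕 (fun x : ℝ => Complex.exp ((2 * π * a * x : ℝ) * Complex.I) * φ x) ξ = 𝓕 φ (ξ - a) := by
  rw [Real.fourier_real_eq_integral_exp_smul,
    Real.fourier_real_eq_integral_exp_smul]
  congr 1; ext v
  rw [smul_eq_mul, smul_eq_mul, ← mul_assoc, ← Complex.exp_add]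
  congr 1
  push_cast
  ring

lemma fourier_lin' (f g : ℝ → ℂ) (hf : Integrable f) (hg : Integrable g) (c d : ℂ) (ξ : ℝ) :
    𝓕 (fun x : ℝ => c * f x + d * g x) ξ = c * 𝓕 f ξ + d * 𝓕 g ξ := by
  simp_rw [Real.fourier_real_eq_integral_exp_smul, smul_eq_mul, mul_add,
    mul_left_comm _ c, mul_left_comm _ d]
  rw [integral_add ((char_integrable' f hf ξ).const_mul c) ((char_integrable' g hg ξ).const_mul d),
    integral_const_mul, integral_const_mul]

/-- The Hilbert transform of a bandlimited windowed cosine `φ(x) cos(2π ξ₀ x)` is the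
windowed sine `φ(x) sin(2π ξ₀ x)`. -/
theorem hilbert_of_bandlimited_windowed_cosine
    (ξ₀ : ℝ) (hξ₀ : 0 < ξ₀) (φ : ℝ → ℂ) (hφ : Integrable φ)
    (hband : ∀ ξ : ℝ, ξ₀ ≤ |ξ| → 𝓕 φ ξ = 0) :
    ∀ ξ : ℝ,
      𝓕 (fun x : ℝ => φ x * (Real.sin (2 * π * ξ₀ * x) : ℂ)) ξ =
        -Complex.I * (Real.sign ξ : ℂ) *
          𝓕 (fun x : ℝ => φ x * (Real.cos (2 * π * ξ₀ * x) : ℂ)) ξ := by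
  intro ξ
  set Ep : ℝ → ℂ := fun x => Complex.exp ((2 * π * ξ₀ * x : ℝ) * Complex.I) * φ x with hEp
  set Em : ℝ → ℂ := fun x => Complex.exp ((2 * π * (-ξ₀) * x : ℝ) * Complex.I) * φ x with hEm
  have hIp : Integrable Ep := exp_mul_integrable' φ hφ (2 * π * ξ₀)
  have hIm : Integrable Em := by
    have := exp_mul_integrable' φ hφ (2 * π * (-ξ₀))
    simpa [hEm] using this
  have hFp : 𝓕 Ep ξ = 𝓕 φ (ξ - ξ₀) := fourier_mod' φ ξ₀ ξ
  have hFm : 𝓕 Em ξ = 𝓕 φ (ξ + ξ₀) := by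
    have := fourier_mod' φ (-ξ₀) ξ
    simpa [hEm, sub_neg_eq_add] using this
  have key : ∀ x : ℝ, ((2 * π * (-ξ₀) * x : ℝ) : ℂ) = -((2 * π * ξ₀ * x : ℝ) : ℂ) := by
    intro x; push_cast; ring
  have hsin : (fun x : ℝ => φ x * (Real.sin (2 * π * ξ₀ * x) : ℂ)) =
      fun x : ℝ => (-Complex.I / 2) * Ep x + (Complex.I / 2) * Em x := by
    funext x
    simp only [hEp, hEm, key x, Complex.exp_mul_I, Complex.cos_neg, Complex.sin_neg,
      Complex.ofReal_sin]
    linear_combination (φ x * Complex.sin ((2 * π * ξ₀ * x : ℝ) : ℂ)) * Complex.I_sq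
  have hcos : (fun x : ℝ => φ x * (Real.cos (2 * π * ξ₀ * x) : ℂ)) =
      fun x : ℝ => ((1 : ℂ) / 2) * Ep x + ((1 : ℂ) / 2) * Em x := by
    funext x
    simp only [hEp, hEm, key x, Complex.exp_mul_I, Complex.cos_neg, Complex.sin_neg,
      Complex.ofReal_cos]
    ring
  rw [hsin, hcos, fourier_lin' Ep Em hIp hIm _ _ ξ, fourier_lin' Ep Em hIp hIm _ _ ξ,
    hFp, hFm]
  rcases lt_trichotomy ξ 0 with hlt | heq | hgt
  · have h1 : 𝓕 φ (ξ - ξ₀) = 0 := by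
      apply hband
      rw [abs_of_neg (by linarith)]
      linarith
    rw [h1, Real.sign_of_neg hlt]
    push_cast
    ring
  · have h1 : 𝓕 φ (ξ - ξ₀) = 0 := by
      apply hband; rw [heq]; simp [abs_of_nonneg hξ₀.le]
    have h2 : 𝓕 φ (ξ + ξ₀) = 0 := by
      apply hband; rw [heq]; simp [abs_of_nonneg hξ₀.le]
    rw [h1, h2, heq, Real.sign_zero]
    push_cast
    ring
  · have h2 : 𝓕 φ (ξ + ξ₀) = 0 := by
      apply hband
      rw [abs_of_pos (by linarith)]
      linarith
    rw [h2, Real.sign_of_pos hgt]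
    push_cast
    ring
end

section
/- (Proposition 1, fractional Hilbert transform of a Gabor-like wavelet.) Let ξ₀ > 0, τ ∈ ℝ, and let φ : ℝ → ℂ be integrable with 𝓕φ(ξ) = 0 whenever |ξ| ≥ ξ₀. Then for every ξ ∈ ℝ, 𝓕(x ↦ φ(x)·cos(2π ξ₀ x + π τ))(ξ) = (cos(π τ) + i·sin(π τ)·sign(ξ))·𝓕(x ↦ φ(x)·cos(2π ξ₀ x))(ξ). Equivalently, the fractional Hilbert transform 𝗛_τ = cos(πτ)·I − sin(πτ)·𝗛 applied to the windowed cosine φ(x)cos(2π ξ₀ x) yields φ(x)cos(2π ξ₀ x + π τ): it acts on the phase of the modulating sinusoid while preserving the envelope. -/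
open MeasureTheory
open scoped FourierTransform Real

private lemma cos_as_exp (θ : ℝ) :
    ((Real.cos θ : ℂ)) = (Complex.exp (θ*Complex.I) + Complex.exp (-θ*Complex.I))/2 := by
  rw [Complex.ofReal_cos, Complex.cos]

private lemma key_integrable (φ : ℝ → ℂ) (hφ : Integrable φ) (w : ℝ) :
    Integrable (fun x : ℝ => Complex.exp (↑(-2*π*x*w) * Complex.I) * φ x) := by
  refine hφ.bdd_mul (c := 1) ?_ (Filter.Eventually.of_forall fun x => le_of_eq (Complex.norm_exp_ofReal_mul_I _))
  exact (Complex.continuous_exp.comp (by fun_prop)).aestronglyMeasurable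

private lemma key (φ : ℝ → ℂ) (hφ : Integrable φ) (ξ₀ a ξ : ℝ) :
    𝓕 (fun x : ℝ => φ x * (Real.cos (2 * π * ξ₀ * x + a) : ℂ)) ξ =
      Complex.exp (↑a * Complex.I)/2 * 𝓕 φ (ξ - ξ₀)
        + Complex.exp (-↑a * Complex.I)/2 * 𝓕 φ (ξ + ξ₀) := by
  simp_rw [Real.fourier_real_eq_integral_exp_smul, smul_eq_mul,
    ← integral_const_mul]
  rw [← integral_add ((key_integrable φ hφ (ξ - ξ₀)).const_mul _)
      ((key_integrable φ hφ (ξ + ξ₀)).const_mul _)]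
  congr 1
  ext x
  rw [cos_as_exp, show Complex.exp (↑a * Complex.I) / 2 *
        (Complex.exp (↑(-2 * π * x * (ξ - ξ₀)) * Complex.I) * φ x) =
      Complex.exp (↑a * Complex.I + ↑(-2 * π * x * (ξ - ξ₀)) * Complex.I) * φ x / 2 by
        rw [Complex.exp_add]; ring,
    show Complex.exp (-↑a * Complex.I) / 2 *
        (Complex.exp (↑(-2 * π * x * (ξ + ξ₀)) * Complex.I) * φ x) =
      Complex.exp (-↑a * Complex.I + ↑(-2 * π * x * (ξ + ξ₀)) * Complex.I) * φ x / 2 by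
        rw [Complex.exp_add]; ring]
  rw [show Complex.exp (↑(-2*π*x*ξ) * Complex.I) *
        (φ x * ((Complex.exp (↑(2*π*ξ₀*x + a) * Complex.I)
          + Complex.exp (-↑(2*π*ξ₀*x + a) * Complex.I))/2)) =
      Complex.exp (↑(-2*π*x*ξ) * Complex.I + ↑(2*π*ξ₀*x + a) * Complex.I) * φ x / 2
        + Complex.exp (↑(-2*π*x*ξ) * Complex.I + -↑(2*π*ξ₀*x + a) * Complex.I) * φ x / 2 by
        rw [Complex.exp_add, Complex.exp_add]; ring]
  congr 3 <;> push_cast <;> ring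

/-- Proposition 1: the fractional Hilbert transform `𝗛_τ` applied to the bandlimited
windowed cosine `φ(x) cos(2π ξ₀ x)` yields `φ(x) cos(2π ξ₀ x + π τ)`; on the Fourier side,
the phase-shifted wavelet corresponds to multiplication by `cos(πτ) + i sin(πτ) sign(ξ)`. -/
theorem fractional_hilbert_of_gabor_wavelet
    (ξ₀ : ℝ) (hξ₀ : 0 < ξ₀) (τ : ℝ) (φ : ℝ → ℂ) (hφ : Integrable φ)
    (hband : ∀ ξ : ℝ, ξ₀ ≤ |ξ| → 𝓕 φ ξ = 0) :
    ∀ ξ : ℝ,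
      𝓕 (fun x : ℝ => φ x * (Real.cos (2 * π * ξ₀ * x + π * τ) : ℂ)) ξ =
        ((Real.cos (π * τ) : ℂ) + Complex.I * (Real.sin (π * τ) : ℂ) * (Real.sign ξ : ℂ)) *
          𝓕 (fun x : ℝ => φ x * (Real.cos (2 * π * ξ₀ * x) : ℂ)) ξ := by
  intro ξ
  have h0 : 𝓕 (fun x : ℝ => φ x * (Real.cos (2 * π * ξ₀ * x) : ℂ)) ξ =
      Complex.exp (↑(0:ℝ) * Complex.I)/2 * 𝓕 φ (ξ - ξ₀)
        + Complex.exp (-↑(0:ℝ) * Complex.I)/2 * 𝓕 φ (ξ + ξ₀) := by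
    rw [← key φ hφ ξ₀ 0 ξ]; simp
  have h1 := key φ hφ ξ₀ (π * τ) ξ
  have hexp : Complex.exp (↑(π*τ) * Complex.I) =
      (Real.cos (π * τ) : ℂ) + (Real.sin (π * τ) : ℂ) * Complex.I := by
    rw [Complex.exp_mul_I]; push_cast; ring
  have hexp' : Complex.exp (-↑(π*τ) * Complex.I) =
      (Real.cos (π * τ) : ℂ) - (Real.sin (π * τ) : ℂ) * Complex.I := by
    rw [show (-↑(π*τ) * Complex.I : ℂ) = (↑(-(π*τ)) : ℂ) * Complex.I by push_cast; ring,
      Complex.exp_mul_I]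
    push_cast
    simp [Complex.cos_neg, Complex.sin_neg]
    ring
  rcases lt_trichotomy ξ 0 with hξ | hξ | hξ
  · have hm : 𝓕 φ (ξ - ξ₀) = 0 := by
      apply hband; rw [abs_of_nonpos (by linarith)]; linarith
    rw [h1, h0, hm, Real.sign_of_neg hξ, hexp']
    simp only [Complex.ofReal_zero, zero_mul, neg_zero, Complex.exp_zero]
    push_cast
    ring
  · have hm : 𝓕 φ (ξ - ξ₀) = 0 := by
      apply hband; rw [hξ]; simp [abs_of_nonpos, hξ₀.le]
    have hp : 𝓕 φ (ξ + ξ₀) = 0 := by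
      apply hband; rw [hξ]; simp [abs_of_nonneg hξ₀.le]
    rw [h1, h0, hm, hp]
    simp
  · have hp : 𝓕 φ (ξ + ξ₀) = 0 := by
      apply hband; rw [abs_of_nonneg (by linarith)]; linarith
    rw [h1, h0, hp, Real.sign_of_pos hξ, hexp]
    simp only [Complex.ofReal_zero, zero_mul, neg_zero, Complex.exp_zero]
    push_cast
    ring
end

section
/- (Directional Hilbert transform of a bandlimited windowed plane wave.) Let Ω > 0, let u ∈ ℝ² be a unit vector, and let φ : ℝ² → ℂ be integrable with 𝓕φ(ω) = 0 whenever ‖ω‖ ≥ Ω. Then for every ω ∈ ℝ², 𝓕(x ↦ φ(x)·sin(2π Ω ⟨u, x⟩))(ω) = −i·sign(⟨u, ω⟩)·𝓕(x ↦ φ(x)·cos(2π Ω ⟨u, x⟩))(ω). That is, the directional Hilbert transform along u takes the windowed directional cosine to the windowed directional sine, preserving the window. -/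
open MeasureTheory Complex
open scoped FourierTransform Real RealInnerProductSpace

lemma modulation_aux (u : EuclideanSpace ℝ (Fin 2))
    (φ : EuclideanSpace ℝ (Fin 2) → ℂ) (a : ℝ) (ω : EuclideanSpace ℝ (Fin 2)) :
    𝓕 (fun x => φ x * Complex.exp (↑(2 * π * a * ⟪u, x⟫) * Complex.I)) ω
      = 𝓕 φ (ω - a • u) := by
  rw [Real.fourier_eq', Real.fourier_eq']
  congr 1
  ext x
  have h1 : ⟪x, ω - a • u⟫ = ⟪x, ω⟫ - a * ⟪u, x⟫ := by
    rw [inner_sub_right, inner_smul_right, real_inner_comm u x]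
  rw [h1]
  push_cast
  rw [smul_eq_mul, smul_eq_mul]
  rw [mul_comm (φ x), ← mul_assoc, ← Complex.exp_add]
  congr 2
  ring

lemma integrable_mod (u : EuclideanSpace ℝ (Fin 2))
    (φ : EuclideanSpace ℝ (Fin 2) → ℂ) (hφ : Integrable φ) (a : ℝ) :
    Integrable (fun x => φ x * Complex.exp (↑(2 * π * a * ⟪u, x⟫) * Complex.I)) := by
  have hm : AEStronglyMeasurable
      (fun x : EuclideanSpace ℝ (Fin 2) =>
        Complex.exp (↑(2 * π * a * ⟪u, x⟫) * Complex.I)) volume := by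
    apply Continuous.aestronglyMeasurable
    exact Complex.continuous_exp.comp
      ((Complex.continuous_ofReal.comp
        (continuous_const.mul (continuous_const.inner continuous_id))).mul continuous_const)
  have := hφ.bdd_mul (c := 1) hm (Filter.Eventually.of_forall fun x => by
    rw [Complex.norm_exp_ofReal_mul_I])
  simpa [mul_comm] using this

lemma sin_key (θ : ℝ) : (Real.sin θ : ℂ) =
    (2 * Complex.I)⁻¹ * (Complex.exp (↑θ * Complex.I) - Complex.exp (↑(-θ) * Complex.I)) := by
  rw [Complex.exp_mul_I, Complex.exp_mul_I]
  push_cast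
  rw [Complex.cos_neg, Complex.sin_neg]
  field_simp
  ring

lemma cos_key (θ : ℝ) : (Real.cos θ : ℂ) =
    (2 : ℂ)⁻¹ * (Complex.exp (↑θ * Complex.I) + Complex.exp (↑(-θ) * Complex.I)) := by
  rw [Complex.exp_mul_I, Complex.exp_mul_I]
  push_cast
  rw [Complex.cos_neg, Complex.sin_neg]
  field_simp
  ring

lemma band_add (Ω : ℝ) (hΩ : 0 < Ω) (u : EuclideanSpace ℝ (Fin 2)) (hu : ‖u‖ = 1)
    (ω : EuclideanSpace ℝ (Fin 2)) (h : 0 ≤ ⟪u, ω⟫) : Ω ≤ ‖ω + Ω • u‖ := by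
  have h2 : Ω ^ 2 ≤ ‖ω + Ω • u‖ ^ 2 := by
    rw [norm_add_sq_real, norm_smul, hu, inner_smul_right, real_inner_comm]
    have : 0 ≤ Ω * ⟪u, ω⟫ := mul_nonneg hΩ.le h
    have hΩ' : ‖Ω‖ = Ω := abs_of_pos hΩ
    rw [hΩ']
    nlinarith [sq_nonneg ‖ω‖]
  nlinarith [norm_nonneg (ω + Ω • u)]

lemma band_sub (Ω : ℝ) (hΩ : 0 < Ω) (u : EuclideanSpace ℝ (Fin 2)) (hu : ‖u‖ = 1)
    (ω : EuclideanSpace ℝ (Fin 2)) (h : ⟪u, ω⟫ ≤ 0) : Ω ≤ ‖ω - Ω • u‖ := by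
  have h2 : Ω ^ 2 ≤ ‖ω - Ω • u‖ ^ 2 := by
    rw [norm_sub_sq_real, norm_smul, hu, inner_smul_right, real_inner_comm]
    have : Ω * ⟪u, ω⟫ ≤ 0 := mul_nonpos_of_nonneg_of_nonpos hΩ.le h
    have hΩ' : ‖Ω‖ = Ω := abs_of_pos hΩ
    rw [hΩ']
    nlinarith [sq_nonneg ‖ω‖]
  nlinarith [norm_nonneg (ω - Ω • u)]

lemma FS (Ω : ℝ) (u : EuclideanSpace ℝ (Fin 2)) (φ : EuclideanSpace ℝ (Fin 2) → ℂ)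
    (hφ : Integrable φ) (ω : EuclideanSpace ℝ (Fin 2)) :
    𝓕 (fun x => φ x * (Real.sin (2 * π * Ω * ⟪u, x⟫) : ℂ)) ω
      = (2 * Complex.I)⁻¹ • (𝓕 φ (ω - Ω • u) - 𝓕 φ (ω + Ω • u)) := by
  have h1 := (Real.fourierIntegral_convergent_iff (f := fun x =>
    φ x * Complex.exp (↑(2 * π * Ω * ⟪u, x⟫) * Complex.I)) ω).2 (integrable_mod u φ hφ Ω)
  have h2 := (Real.fourierIntegral_convergent_iff (f := fun x =>
    φ x * Complex.exp (↑(2 * π * (-Ω) * ⟪u, x⟫) * Complex.I)) ω).2 (integrable_mod u φ hφ (-Ω))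
  rw [Real.fourier_eq]
  have key : (fun x : EuclideanSpace ℝ (Fin 2) =>
      𝐞 (-⟪x, ω⟫) • (φ x * (Real.sin (2 * π * Ω * ⟪u, x⟫) : ℂ)))
    = fun x => (2 * Complex.I)⁻¹ •
        ((𝐞 (-⟪x, ω⟫) • (φ x * Complex.exp (↑(2 * π * Ω * ⟪u, x⟫) * Complex.I)))
          - (𝐞 (-⟪x, ω⟫) • (φ x * Complex.exp (↑(2 * π * (-Ω) * ⟪u, x⟫) * Complex.I)))) := by
    funext x
    rw [show 2 * π * (-Ω) * ⟪u, x⟫ = -(2 * π * Ω * ⟪u, x⟫) from by ring, sin_key]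
    simp only [Circle.smul_def, smul_eq_mul]
    ring
  rw [key, integral_smul, integral_sub h1 h2, ← Real.fourier_eq,
    ← Real.fourier_eq, modulation_aux, modulation_aux,
    show ω - (-Ω) • u = ω + Ω • u from by rw [neg_smul, sub_neg_eq_add]]

lemma FC (Ω : ℝ) (u : EuclideanSpace ℝ (Fin 2)) (φ : EuclideanSpace ℝ (Fin 2) → ℂ)
    (hφ : Integrable φ) (ω : EuclideanSpace ℝ (Fin 2)) :
    𝓕 (fun x => φ x * (Real.cos (2 * π * Ω * ⟪u, x⟫) : ℂ)) ω
      = (2 : ℂ)⁻¹ • (𝓕 φ (ω - Ω • u) + 𝓕 φ (ω + Ω • u)) := by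
  have h1 := (Real.fourierIntegral_convergent_iff (f := fun x =>
    φ x * Complex.exp (↑(2 * π * Ω * ⟪u, x⟫) * Complex.I)) ω).2 (integrable_mod u φ hφ Ω)
  have h2 := (Real.fourierIntegral_convergent_iff (f := fun x =>
    φ x * Complex.exp (↑(2 * π * (-Ω) * ⟪u, x⟫) * Complex.I)) ω).2 (integrable_mod u φ hφ (-Ω))
  rw [Real.fourier_eq]
  have key : (fun x : EuclideanSpace ℝ (Fin 2) =>
      𝐞 (-⟪x, ω⟫) • (φ x * (Real.cos (2 * π * Ω * ⟪u, x⟫) : ℂ)))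
    = fun x => (2 : ℂ)⁻¹ •
        ((𝐞 (-⟪x, ω⟫) • (φ x * Complex.exp (↑(2 * π * Ω * ⟪u, x⟫) * Complex.I)))
          + (𝐞 (-⟪x, ω⟫) • (φ x * Complex.exp (↑(2 * π * (-Ω) * ⟪u, x⟫) * Complex.I)))) := by
    funext x
    rw [show 2 * π * (-Ω) * ⟪u, x⟫ = -(2 * π * Ω * ⟪u, x⟫) from by ring, cos_key]
    simp only [Circle.smul_def, smul_eq_mul]
    ring
  rw [key, integral_smul, integral_add h1 h2, ← Real.fourier_eq,
    ← Real.fourier_eq, modulation_aux, modulation_aux,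
    show ω - (-Ω) • u = ω + Ω • u from by rw [neg_smul, sub_neg_eq_add]]

/-- Directional Hilbert transform of a bandlimited windowed plane wave: the directional
Hilbert transform along the unit vector `u` takes the windowed directional cosine
`φ(x) cos(2π Ω ⟨u, x⟩)` to the windowed directional sine, preserving the window. -/
theorem directional_hilbert_of_windowed_plane_wave
    (Ω : ℝ) (hΩ : 0 < Ω) (u : EuclideanSpace ℝ (Fin 2)) (hu : ‖u‖ = 1)
    (φ : EuclideanSpace ℝ (Fin 2) → ℂ) (hφ : Integrable φ)
    (hband : ∀ ω : EuclideanSpace ℝ (Fin 2), Ω ≤ ‖ω‖ → 𝓕 φ ω = 0) :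
    ∀ ω : EuclideanSpace ℝ (Fin 2),
      𝓕 (fun x : EuclideanSpace ℝ (Fin 2) =>
          φ x * (Real.sin (2 * π * Ω * ⟪u, x⟫) : ℂ)) ω =
        -Complex.I * (Real.sign ⟪u, ω⟫ : ℂ) *
          𝓕 (fun x : EuclideanSpace ℝ (Fin 2) =>
              φ x * (Real.cos (2 * π * Ω * ⟪u, x⟫) : ℂ)) ω := by
  intro ω
  have hA : ⟪u, ω⟫ ≤ 0 → 𝓕 φ (ω - Ω • u) = 0 :=
    fun h => hband _ (band_sub Ω hΩ u hu ω h)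
  have hB : 0 ≤ ⟪u, ω⟫ → 𝓕 φ (ω + Ω • u) = 0 :=
    fun h => hband _ (band_add Ω hΩ u hu ω h)
  rw [FS Ω u φ hφ ω, FC Ω u φ hφ ω]
  have h2I : (2 * Complex.I)⁻¹ = -Complex.I / 2 := by
    rw [mul_inv, Complex.inv_I]; ring
  rcases lt_trichotomy (⟪u, ω⟫ : ℝ) 0 with h | h | h
  · rw [hA h.le, Real.sign_of_neg h]
    simp only [smul_eq_mul, zero_sub, zero_add, h2I]
    push_cast
    ring
  · rw [hA h.le, hB h.ge, h, Real.sign_zero]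
    simp
  · rw [hB h.le, Real.sign_of_pos h]
    simp only [smul_eq_mul, sub_zero, add_zero, h2I]
    push_cast
    ring
end

section
/- (Proposition 2, fractional directional Hilbert transform of a windowed plane wave.) Let Ω > 0, τ ∈ ℝ, let u ∈ ℝ² be a unit vector, and let φ : ℝ² → ℂ be integrable with 𝓕φ(ω) = 0 whenever ‖ω‖ ≥ Ω. Then for every ω ∈ ℝ², 𝓕(x ↦ φ(x)·cos(2π Ω ⟨u, x⟩ + π τ))(ω) = (cos(πτ) + i·sin(πτ)·sign(⟨u, ω⟩))·𝓕(x ↦ φ(x)·cos(2π Ω ⟨u, x⟩))(ω). Equivalently, the fractional directional Hilbert transform 𝗛_{u,τ} = cos(πτ)·I − sin(πτ)·𝗛_u applied to φ(x)cos(2π Ω ⟨u, x⟩) equals φ(x)cos(2π Ω ⟨u, x⟩ + π τ): it acts only on the phase of the oscillation while the window remains fixed. -/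
open MeasureTheory Complex
open scoped FourierTransform Real RealInnerProductSpace

local notation "E2" => EuclideanSpace ℝ (Fin 2)

lemma aux_integrable (c : ℝ) (u : E2) (φ : E2 → ℂ) (hφ : Integrable φ) :
    Integrable (fun x : E2 => φ x * Complex.exp ((2 * π * c * ⟪u, x⟫ : ℝ) * Complex.I)) := by
  have hc : Continuous fun x : E2 => Complex.exp ((2 * π * c * ⟪u, x⟫ : ℝ) * Complex.I) := by
    exact Complex.continuous_exp.comp
      ((Complex.continuous_ofReal.comp (continuous_const.mul (Continuous.inner continuous_const continuous_id))).mul continuous_const)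
  refine hφ.norm.mono' (hφ.aestronglyMeasurable.mul hc.aestronglyMeasurable)
    (Filter.Eventually.of_forall fun x => ?_)
  rw [norm_mul, Complex.norm_exp_ofReal_mul_I]
  simp

lemma aux_mod (c : ℝ) (u : E2) (φ : E2 → ℂ) (ω : E2) :
    𝓕 (fun x : E2 => φ x * Complex.exp ((2 * π * c * ⟪u, x⟫ : ℝ) * Complex.I)) ω
      = 𝓕 φ (ω - c • u) := by
  rw [Real.fourier_eq', Real.fourier_eq']
  congr 1
  ext v
  rw [smul_eq_mul, smul_eq_mul,
    show ((-2 * π * ⟪v, ω - c • u⟫ : ℝ) : ℂ)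
        = ((-2 * π * ⟪v, ω⟫ : ℝ) : ℂ) + ((2 * π * c * ⟪u, v⟫ : ℝ) : ℂ) by
      push_cast [inner_sub_right, real_inner_smul_right, real_inner_comm v u]
      ring,
    add_mul, Complex.exp_add]
  ring

lemma aux_decomp (c θ : ℝ) (u : E2) (φ : E2 → ℂ) (hφ : Integrable φ) (ω : E2) :
    𝓕 (fun x : E2 => φ x * (Real.cos (2 * π * c * ⟪u, x⟫ + θ) : ℂ)) ω
      = Complex.exp ((θ : ℂ) * Complex.I) / 2 * 𝓕 φ (ω - c • u)
        + Complex.exp (-(θ : ℂ) * Complex.I) / 2 * 𝓕 φ (ω + c • u) := by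
  set f1 : E2 → ℂ := fun x => φ x * Complex.exp ((2 * π * c * ⟪u, x⟫ : ℝ) * Complex.I) with hf1
  set f2 : E2 → ℂ := fun x => φ x * Complex.exp ((2 * π * (-c) * ⟪u, x⟫ : ℝ) * Complex.I) with hf2
  have hfun : (fun x : E2 => φ x * (Real.cos (2 * π * c * ⟪u, x⟫ + θ) : ℂ))
      = (Complex.exp ((θ : ℂ) * Complex.I) / 2) • f1
        + (Complex.exp (-(θ : ℂ) * Complex.I) / 2) • f2 := by
    funext x
    simp only [Pi.add_apply, Pi.smul_apply, smul_eq_mul, hf1, hf2]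
    rw [Complex.ofReal_cos, Complex.cos]
    push_cast
    rw [show ((2:ℂ) * π * c * ⟪u, x⟫ + θ) * Complex.I
          = (2 * π * c * ⟪u, x⟫ : ℂ) * Complex.I + (θ:ℂ) * Complex.I by ring,
      show (-((2:ℂ) * π * c * ⟪u, x⟫ + θ)) * Complex.I
          = (2 * π * (-c) * ⟪u, x⟫ : ℂ) * Complex.I + (-(θ:ℂ)) * Complex.I by ring,
      Complex.exp_add, Complex.exp_add]
    ring
  have I1 : Integrable f1 := aux_integrable c u φ hφ
  have I2 : Integrable f2 := aux_integrable (-c) u φ hφ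
  rw [hfun]
  have hadd := congrFun (VectorFourier.fourierIntegral_add (L := innerₗ E2)
    Real.continuous_fourierChar continuous_inner
    (I1.smul (Complex.exp ((θ : ℂ) * Complex.I) / 2))
    (I2.smul (Complex.exp (-(θ : ℂ) * Complex.I) / 2))) ω
  have hs1 := congrFun (VectorFourier.fourierIntegral_const_smul (𝕜 := ℝ) 𝐞 volume (innerₗ E2)
    f1 (Complex.exp ((θ : ℂ) * Complex.I) / 2)) ω
  have hs2 := congrFun (VectorFourier.fourierIntegral_const_smul (𝕜 := ℝ) 𝐞 volume (innerₗ E2)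
    f2 (Complex.exp (-(θ : ℂ) * Complex.I) / 2)) ω
  have h1 : 𝓕 f1 (ω) = 𝓕 φ (ω - c • u) := aux_mod c u φ ω
  have h2 : 𝓕 f2 (ω) = 𝓕 φ (ω + c • u) := by
    have := aux_mod (-c) u φ ω
    rwa [neg_smul, sub_neg_eq_add] at this
  show VectorFourier.fourierIntegral 𝐞 volume (innerₗ E2) _ ω = _
  rw [hadd, Pi.add_apply, hs1, hs2, Pi.smul_apply, Pi.smul_apply, smul_eq_mul, smul_eq_mul,
    show VectorFourier.fourierIntegral 𝐞 volume (innerₗ E2) f1 ω = 𝓕 φ (ω - c • u) from h1,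
    show VectorFourier.fourierIntegral 𝐞 volume (innerₗ E2) f2 ω = 𝓕 φ (ω + c • u) from h2]

/-- Proposition 2: the fractional directional Hilbert transform
`𝗛_{u,τ} = cos(πτ) I - sin(πτ) 𝗛_u` applied to the bandlimited windowed plane wave
`φ(x) cos(2π Ω ⟨u, x⟩)` yields `φ(x) cos(2π Ω ⟨u, x⟩ + π τ)`; on the Fourier side it
multiplies by `cos(πτ) + i sin(πτ) sign(⟨u, ω⟩)`. -/
theorem fractional_directional_hilbert_of_windowed_plane_wave
    (Ω : ℝ) (hΩ : 0 < Ω) (τ : ℝ) (u : EuclideanSpace ℝ (Fin 2)) (hu : ‖u‖ = 1)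
    (φ : EuclideanSpace ℝ (Fin 2) → ℂ) (hφ : Integrable φ)
    (hband : ∀ ω : EuclideanSpace ℝ (Fin 2), Ω ≤ ‖ω‖ → 𝓕 φ ω = 0) :
    ∀ ω : EuclideanSpace ℝ (Fin 2),
      𝓕 (fun x : EuclideanSpace ℝ (Fin 2) =>
          φ x * (Real.cos (2 * π * Ω * ⟪u, x⟫ + π * τ) : ℂ)) ω =
        ((Real.cos (π * τ) : ℂ) +
            Complex.I * (Real.sin (π * τ) : ℂ) * (Real.sign ⟪u, ω⟫ : ℂ)) *
          𝓕 (fun x : EuclideanSpace ℝ (Fin 2) =>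
              φ x * (Real.cos (2 * π * Ω * ⟪u, x⟫) : ℂ)) ω := by
  intro ω
  have h0 : 𝓕 (fun x : E2 => φ x * (Real.cos (2 * π * Ω * ⟪u, x⟫) : ℂ)) ω
      = (1 : ℂ) / 2 * 𝓕 φ (ω - Ω • u) + (1 : ℂ) / 2 * 𝓕 φ (ω + Ω • u) := by
    have := aux_decomp Ω 0 u φ hφ ω
    simpa using this
  rw [aux_decomp Ω (π * τ) u φ hφ ω, h0]
  set a := 𝓕 φ (ω - Ω • u) with ha
  set b := 𝓕 φ (ω + Ω • u) with hb
  -- if a ≠ 0 then ⟪u, ω⟫ > 0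
  have key : ∀ v : E2, ⟪u, ω - v⟫ = ⟪u, ω⟫ - ⟪u, v⟫ := fun v => inner_sub_right u ω v
  have hu2 : ⟪u, u⟫ = (1 : ℝ) := by
    rw [real_inner_self_eq_norm_sq, hu]; norm_num
  have hapos : a ≠ 0 → 0 < ⟪u, ω⟫ := by
    intro h
    have hlt : ‖ω - Ω • u‖ < Ω := by
      by_contra hle
      exact h (hband _ (le_of_not_gt hle))
    have h1 : |⟪u, ω - Ω • u⟫| ≤ ‖ω - Ω • u‖ := by
      have := abs_real_inner_le_norm u (ω - Ω • u)
      rwa [hu, one_mul] at this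
    have h2 : ⟪u, ω - Ω • u⟫ = ⟪u, ω⟫ - Ω := by
      rw [key, real_inner_smul_right, hu2, mul_one]
    have := abs_le.1 h1
    linarith [this.1]
  have hbneg : b ≠ 0 → ⟪u, ω⟫ < 0 := by
    intro h
    have hlt : ‖ω + Ω • u‖ < Ω := by
      by_contra hle
      exact h (hband _ (le_of_not_gt hle))
    have h1 : |⟪u, ω + Ω • u⟫| ≤ ‖ω + Ω • u‖ := by
      have := abs_real_inner_le_norm u (ω + Ω • u)
      rwa [hu, one_mul] at this
    have h2 : ⟪u, ω + Ω • u⟫ = ⟪u, ω⟫ + Ω := by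
      rw [inner_add_right, real_inner_smul_right, hu2, mul_one]
    have := abs_le.1 h1
    linarith [this.2]
  by_cases hA : a = 0
  · by_cases hB : b = 0
    · simp [hA, hB]
    · rw [Real.sign_of_neg (hbneg hB), hA]
      rw [Complex.exp_mul_I, Complex.exp_mul_I]
      push_cast [Complex.cos_neg, Complex.sin_neg, Complex.ofReal_cos, Complex.ofReal_sin]
      ring
  · have hB : b = 0 := by
      by_contra hB
      exact absurd (hapos hA) (not_lt.2 (le_of_lt (hbneg hB)))
    rw [Real.sign_of_pos (hapos hA), hB]
    rw [Complex.exp_mul_I, Complex.exp_mul_I]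
    push_cast [Complex.cos_neg, Complex.sin_neg, Complex.ofReal_cos, Complex.ofReal_sin]
    ring
end

section
/- (Directional quadrature relation for the diagonal complex wavelet Ψ₅, oriented along θ = π/4.) Let ψ, ψ' : ℝ → ℂ be integrable functions with 𝓕ψ'(ξ) = −i·sign(ξ)·𝓕ψ(ξ) for all ξ ∈ ℝ. Define on ℝ² the functions A(x, y) = (ψ(x)ψ(y) − ψ'(x)ψ'(y))/√2 and B(x, y) = (ψ(x)ψ'(y) + ψ'(x)ψ(y))/√2. Then for every ω = (ω₁, ω₂) ∈ ℝ², 𝓕B(ω) = −i·sign(ω₁ + ω₂)·𝓕A(ω); that is, B is the directional Hilbert transform of A along the diagonal direction u = (1/√2, 1/√2), so Ψ₅ = A + iB is a direction-selective complex wavelet oriented along θ₅ = π/4. -/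
open MeasureTheory
open scoped FourierTransform Real RealInnerProductSpace

noncomputable def eE : (ℝ × ℝ) ≃ᵐ EuclideanSpace ℝ (Fin 2) :=
  MeasurableEquiv.finTwoArrow.symm.trans (MeasurableEquiv.toLp 2 (Fin 2 → ℝ))

lemma eE_mp : MeasurePreserving eE volume volume :=
  ((EuclideanSpace.volume_preserving_symm_measurableEquiv_toLp (Fin 2)).symm _).comp
    ((volume_preserving_finTwoArrow ℝ).symm _)

lemma eE_apply0 (p : ℝ × ℝ) : eE p 0 = p.1 := rfl
lemma eE_apply1 (p : ℝ × ℝ) : eE p 1 = p.2 := rfl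

lemma inner_eE (p : ℝ × ℝ) (ω : EuclideanSpace ℝ (Fin 2)) :
    ⟪eE p, ω⟫ = p.1 * ω 0 + p.2 * ω 1 := by
  simp [PiLp.inner_apply, Fin.sum_univ_two, eE_apply0, eE_apply1, RCLike.inner_apply]
  ring

lemma integrable_sep (a b : ℝ → ℂ) (ha : Integrable a) (hb : Integrable b) :
    Integrable (fun x : EuclideanSpace ℝ (Fin 2) => a (x 0) * b (x 1)) := by
  have h := ha.mul_prod hb
  rw [← eE_mp.integrable_comp_emb eE.measurableEmbedding]
  exact h

lemma fourier_sep (a b : ℝ → ℂ) (ha : Integrable a) (hb : Integrable b)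
    (ω : EuclideanSpace ℝ (Fin 2)) :
    𝓕 (fun x : EuclideanSpace ℝ (Fin 2) => a (x 0) * b (x 1)) ω
      = 𝓕 a (ω 0) * 𝓕 b (ω 1) := by
  rw [Real.fourier_eq, Real.fourier_real_eq, Real.fourier_real_eq,
    ← eE_mp.integral_comp eE.measurableEmbedding]
  rw [← MeasureTheory.integral_prod_mul
    (fun v : ℝ => 𝐞 (-(v * ω 0)) • a v) (fun v : ℝ => 𝐞 (-(v * ω 1)) • b v)]
  apply integral_congr_ae; filter_upwards with p
  simp only [inner_eE, eE_apply0, eE_apply1, Circle.smul_def, neg_add, AddChar.map_add_eq_mul,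
    Circle.coe_mul, smul_eq_mul]
  ring

lemma fourier_comb (a b c d : ℝ → ℂ) (ha : Integrable a) (hb : Integrable b)
    (hc : Integrable c) (hd : Integrable d) (s : ℂ) (ω : EuclideanSpace ℝ (Fin 2)) :
    𝓕 (fun x : EuclideanSpace ℝ (Fin 2) =>
        (a (x 0) * b (x 1) + s * (c (x 0) * d (x 1))) / (Real.sqrt 2 : ℂ)) ω
      = (𝓕 a (ω 0) * 𝓕 b (ω 1) + s * (𝓕 c (ω 0) * 𝓕 d (ω 1))) / (Real.sqrt 2 : ℂ) := by
  have hI1 : Integrable (fun v : EuclideanSpace ℝ (Fin 2) =>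
      𝐞 (-⟪v, ω⟫) • (a (v 0) * b (v 1))) := by
    rw [Real.fourierIntegral_convergent_iff]
    exact integrable_sep a b ha hb
  have hI2 : Integrable (fun v : EuclideanSpace ℝ (Fin 2) =>
      𝐞 (-⟪v, ω⟫) • (c (v 0) * d (v 1))) := by
    rw [Real.fourierIntegral_convergent_iff]
    exact integrable_sep c d hc hd
  rw [Real.fourier_eq]
  have : (fun v : EuclideanSpace ℝ (Fin 2) =>
      𝐞 (-⟪v, ω⟫) • ((a (v 0) * b (v 1) + s * (c (v 0) * d (v 1))) / (Real.sqrt 2 : ℂ)))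
      = fun v => ((𝐞 (-⟪v, ω⟫) • (a (v 0) * b (v 1)))
          + s * (𝐞 (-⟪v, ω⟫) • (c (v 0) * d (v 1)))) / (Real.sqrt 2 : ℂ) := by
    funext v; simp only [Circle.smul_def, smul_eq_mul]; ring
  rw [this, integral_div, integral_add hI1 (hI2.const_mul s), integral_const_mul,
    ← Real.fourier_eq, ← Real.fourier_eq,
    fourier_sep a b ha hb, fourier_sep c d hc hd]

lemma sign_identity (x y : ℝ) :
    Real.sign x + Real.sign y = Real.sign (x + y) * (1 + Real.sign x * Real.sign y) := by
  rcases lt_trichotomy x 0 with hx | hx | hx <;> rcases lt_trichotomy y 0 with hy | hy | hy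
  · rw [Real.sign_of_neg hx, Real.sign_of_neg hy, Real.sign_of_neg (by linarith)]; ring
  · subst hy
    rw [Real.sign_zero, add_zero, add_zero, mul_zero, add_zero, mul_one]
  · rw [Real.sign_of_neg hx, Real.sign_of_pos hy]; ring
  · subst hx
    rw [Real.sign_zero, zero_add, zero_add, zero_mul, add_zero, mul_one]
  · subst hx; subst hy; norm_num
  · subst hx
    rw [Real.sign_zero, zero_add, zero_add, zero_mul, add_zero, mul_one]
  · rw [Real.sign_of_pos hx, Real.sign_of_neg hy]; ring
  · subst hy
    rw [Real.sign_zero, add_zero, add_zero, mul_zero, add_zero, mul_one]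
  · rw [Real.sign_of_pos hx, Real.sign_of_pos hy, Real.sign_of_pos (by linarith)]; ring

/-- Directional quadrature relation for the diagonal complex wavelet `Ψ₅`:
if `ψ' = 𝗛ψ`, then `B(x,y) = (ψ(x)ψ'(y) + ψ'(x)ψ(y))/√2` is the directional Hilbert
transform of `A(x,y) = (ψ(x)ψ(y) - ψ'(x)ψ'(y))/√2` along the diagonal `u = (1/√2, 1/√2)`. -/
theorem directional_quadrature_diagonal
    (ψ ψ' : ℝ → ℂ) (hψ : Integrable ψ) (hψ' : Integrable ψ')
    (hH : ∀ ξ : ℝ, 𝓕 ψ' ξ = -Complex.I * (Real.sign ξ : ℂ) * 𝓕 ψ ξ) :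
    ∀ ω : EuclideanSpace ℝ (Fin 2),
      𝓕 (fun x : EuclideanSpace ℝ (Fin 2) =>
          (ψ (x 0) * ψ' (x 1) + ψ' (x 0) * ψ (x 1)) / (Real.sqrt 2 : ℂ)) ω =
        -Complex.I * (Real.sign (ω 0 + ω 1) : ℂ) *
          𝓕 (fun x : EuclideanSpace ℝ (Fin 2) =>
              (ψ (x 0) * ψ (x 1) - ψ' (x 0) * ψ' (x 1)) / (Real.sqrt 2 : ℂ)) ω := by
  intro ω
  have hB : (fun x : EuclideanSpace ℝ (Fin 2) =>
      (ψ (x 0) * ψ' (x 1) + ψ' (x 0) * ψ (x 1)) / (Real.sqrt 2 : ℂ))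
      = fun x : EuclideanSpace ℝ (Fin 2) =>
        (ψ (x 0) * ψ' (x 1) + (1 : ℂ) * (ψ' (x 0) * ψ (x 1))) / (Real.sqrt 2 : ℂ) := by
    funext x; ring
  have hA : (fun x : EuclideanSpace ℝ (Fin 2) =>
      (ψ (x 0) * ψ (x 1) - ψ' (x 0) * ψ' (x 1)) / (Real.sqrt 2 : ℂ))
      = fun x : EuclideanSpace ℝ (Fin 2) =>
        (ψ (x 0) * ψ (x 1) + (-1 : ℂ) * (ψ' (x 0) * ψ' (x 1))) / (Real.sqrt 2 : ℂ) := by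
    funext x; ring
  rw [hB, hA, fourier_comb ψ ψ' ψ' ψ hψ hψ' hψ' hψ 1 ω,
    fourier_comb ψ ψ ψ' ψ' hψ hψ hψ' hψ' (-1) ω, hH (ω 0), hH (ω 1)]
  have hs : ((Real.sign (ω 0) : ℂ) + (Real.sign (ω 1) : ℂ))
      = (Real.sign (ω 0 + ω 1) : ℂ)
        * (1 + (Real.sign (ω 0) : ℂ) * (Real.sign (ω 1) : ℂ)) := by
    have := sign_identity (ω 0) (ω 1)
    exact_mod_cast congrArg (Complex.ofReal) this
  linear_combination (-Complex.I * 𝓕 ψ (ω 0) * 𝓕 ψ (ω 1) / (Real.sqrt 2 : ℂ)) * hs +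
    (-Complex.I * 𝓕 ψ (ω 0) * 𝓕 ψ (ω 1) * (Real.sign (ω 0) : ℂ) * (Real.sign (ω 1) : ℂ) *
      (Real.sign (ω 0 + ω 1) : ℂ) / (Real.sqrt 2 : ℂ)) * Complex.I_sq
end
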